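/- Lower bound for slowly decaying initial data under gaussian convolution: if $P$ is positive definite on $\mathbb{R}^n$ and $h(y)\ge c_0(1+|y|^2)^{-n}$ for all $y$ with some $c_0>0$, then there is $C<\infty$ (depending on $P,c_0,n$) such that $(g_P*h)(x)\ge C^{-1}(1+|x|^2)^{-n}$ for all $x\in\mathbb{R}^n$, where $g_P(x)=(\det P)^{1/2}e^{-\pi\langle x,Px\rangle}$. -/

import Mathlib

open Matrix MeasureTheory

theorem stmt19 (n : ℕ) (P : Matrix (Fin n) (Fin n) ℝ) (hP : P.PosDef)
    (c0 : ℝ) (hc0 : 0 < c0)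
    (h : (Fin n → ℝ) → ℝ) (hh : Integrable h)
    (hlb : ∀ y, c0 * (1 + y ⬝ᵥ y) ^ (-(n : ℝ)) ≤ h y) :
    ∃ C : ℝ, 0 < C ∧ ∀ x,
      C⁻¹ * (1 + x ⬝ᵥ x) ^ (-(n : ℝ)) ≤
        ∫ y, P.det ^ ((1:ℝ)/2) *
          Real.exp (-Real.pi * ((x - y) ⬝ᵥ (P.mulVec (x - y)))) * h y := by
  -- basic facts
  have hself : ∀ v : Fin n → ℝ, 0 ≤ v ⬝ᵥ v := fun v =>
    Finset.sum_nonneg fun i _ => mul_self_nonneg (v i)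
  have hq0 : ∀ v : Fin n → ℝ, 0 ≤ v ⬝ᵥ P.mulVec v := fun v => by
    have := hP.posSemidef.re_dotProduct_nonneg v
    simpa using this
  have hqcont : Continuous fun v : Fin n → ℝ => v ⬝ᵥ P.mulVec v := by
    simp only [dotProduct, Matrix.mulVec]
    fun_prop
  have hDpos : (0:ℝ) < P.det ^ ((1:ℝ)/2) := Real.rpow_pos_of_pos hP.det_pos _
  set D : ℝ := P.det ^ ((1:ℝ)/2) with hD
  -- bound on quadratic form on closed ball
  obtain ⟨v0, -, hM⟩ := (isCompact_closedBall (0 : Fin n → ℝ) 1).exists_isMaxOn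
    ⟨0, Metric.mem_closedBall_self zero_le_one⟩ hqcont.continuousOn
  set M : ℝ := v0 ⬝ᵥ P.mulVec v0 with hMdef
  set E : ℝ := Real.exp (-Real.pi * M) with hE
  have hEpos : 0 < E := Real.exp_pos _
  set K : ℝ := ((2 * n + 1 : ℝ)) ^ (-(n:ℝ)) with hK
  have h2n : (0:ℝ) < 2 * n + 1 := by positivity
  have hKpos : 0 < K := Real.rpow_pos_of_pos h2n _
  -- volume of the unit closed ball
  set V : ℝ := (volume (Metric.closedBall (0 : Fin n → ℝ) 1)).toReal with hV
  have hVfin : volume (Metric.closedBall (0 : Fin n → ℝ) 1) ≠ ⊤ :=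
    (measure_closedBall_lt_top).ne
  have hVpos : 0 < V := by
    refine ENNReal.toReal_pos ?_ hVfin
    refine (lt_of_lt_of_le (Metric.measure_ball_pos _ _ one_pos)
      (measure_mono Metric.ball_subset_closedBall)).ne'
  refine ⟨(c0 * D * E * K * V)⁻¹, by positivity, fun x => ?_⟩
  rw [inv_inv]
  -- the integrand
  set f : (Fin n → ℝ) → ℝ := fun y =>
    D * Real.exp (-Real.pi * ((x - y) ⬝ᵥ P.mulVec (x - y))) * h y with hf
  have hfpos : ∀ y, 0 ≤ f y := by
    intro y
    have h1 : 0 < (1 + y ⬝ᵥ y) ^ (-(n : ℝ)) :=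
      Real.rpow_pos_of_pos (by have := hself y; linarith) _
    have hy0 : 0 ≤ h y := le_trans (mul_nonneg hc0.le h1.le) (hlb y)
    exact mul_nonneg (mul_nonneg hDpos.le (Real.exp_pos _).le) hy0
  -- integrability
  have hint : Integrable f := by
    have : Integrable (fun y =>
        (fun y => D * Real.exp (-Real.pi * ((x - y) ⬝ᵥ P.mulVec (x - y)))) y * h y) := by
      refine hh.bdd_mul (c := D) ?_ (Filter.Eventually.of_forall fun y => ?_)
      · exact (Continuous.mul continuous_const
          ((Real.continuous_exp.comp
            ((continuous_const.mul ((hqcont.comp (continuous_const.sub continuous_id)))))))).aestronglyMeasurable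
      · rw [Real.norm_eq_abs,
          abs_of_nonneg (mul_nonneg hDpos.le (Real.exp_pos _).le)]
        have hle : Real.exp (-Real.pi * ((x - y) ⬝ᵥ P.mulVec (x - y))) ≤ 1 := by
          apply Real.exp_le_one_iff.mpr
          have := hq0 (x - y)
          nlinarith [Real.pi_pos]
        nlinarith [Real.exp_pos (-Real.pi * ((x - y) ⬝ᵥ P.mulVec (x - y)))]
    exact this
  -- lower bound of f on closedBall x 1
  have hptwise : ∀ y ∈ Metric.closedBall x 1,
      D * E * (c0 * (K * (1 + x ⬝ᵥ x) ^ (-(n : ℝ)))) ≤ f y := by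
    intro y hy
    have hxy : x - y ∈ Metric.closedBall (0 : Fin n → ℝ) 1 := by
      rw [Metric.mem_closedBall, dist_zero_right]
      rw [Metric.mem_closedBall, dist_comm] at hy
      simpa [dist_eq_norm] using hy
    have hexp : E ≤ Real.exp (-Real.pi * ((x - y) ⬝ᵥ P.mulVec (x - y))) := by
      apply Real.exp_le_exp.mpr
      have hle : (x - y) ⬝ᵥ P.mulVec (x - y) ≤ M := hM hxy
      nlinarith [Real.pi_pos]
    -- 1 + y⬝y ≤ (2n+1)(1+x⬝x)
    have hdot : 1 + y ⬝ᵥ y ≤ (2 * n + 1) * (1 + x ⬝ᵥ x) := by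
      have hd1 : dist y x ≤ 1 := hy
      have hcoord : ∀ i, |y i - x i| ≤ 1 := by
        intro i
        calc |y i - x i| = dist (y i) (x i) := by rw [Real.dist_eq]
          _ ≤ dist y x := dist_le_pi_dist y x i
          _ ≤ 1 := hd1
      have hsum : y ⬝ᵥ y ≤ 2 * (x ⬝ᵥ x) + 2 * n := by
        have : ∀ i : Fin n, y i * y i ≤ 2 * (x i * x i) + 2 := by
          intro i
          have := hcoord i
          have h2 : (y i - x i)^2 ≤ 1 := by nlinarith [abs_nonneg (y i - x i), sq_abs (y i - x i)]
          nlinarith [sq_nonneg (2 * x i - y i), sq_nonneg (y i - x i)]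
        calc y ⬝ᵥ y = ∑ i, y i * y i := rfl
          _ ≤ ∑ i : Fin n, (2 * (x i * x i) + 2) := Finset.sum_le_sum fun i _ => this i
          _ = 2 * (x ⬝ᵥ x) + 2 * n := by
              rw [Finset.sum_add_distrib, ← Finset.mul_sum]
              simp [dotProduct, mul_comm]
      rcases Nat.eq_zero_or_pos n with hn | hn
      · subst hn
        have hy0 : y ⬝ᵥ y = 0 := by simp [dotProduct]
        have hx0 : x ⬝ᵥ x = 0 := by simp [dotProduct]
        rw [hy0, hx0]; norm_num
      · have hx := hself x
        have hn1 : (1:ℝ) ≤ n := by exact_mod_cast hn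
        nlinarith
    have hrpow : K * (1 + x ⬝ᵥ x) ^ (-(n : ℝ)) ≤ (1 + y ⬝ᵥ y) ^ (-(n : ℝ)) := by
      have hx1 : (0:ℝ) < 1 + x ⬝ᵥ x := by have := hself x; linarith
      have hy1 : (0:ℝ) < 1 + y ⬝ᵥ y := by have := hself y; linarith
      calc K * (1 + x ⬝ᵥ x) ^ (-(n : ℝ))
          = ((2 * n + 1) * (1 + x ⬝ᵥ x)) ^ (-(n : ℝ)) := by
            rw [Real.mul_rpow h2n.le hx1.le]
        _ ≤ (1 + y ⬝ᵥ y) ^ (-(n : ℝ)) :=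
            Real.rpow_le_rpow_of_nonpos hy1 hdot (neg_nonpos.mpr (Nat.cast_nonneg n))
    have hxr : 0 < (1 + x ⬝ᵥ x) ^ (-(n : ℝ)) :=
      Real.rpow_pos_of_pos (by have := hself x; linarith) _
    have hh' : c0 * (K * (1 + x ⬝ᵥ x) ^ (-(n : ℝ))) ≤ h y := by
      calc c0 * (K * (1 + x ⬝ᵥ x) ^ (-(n : ℝ)))
          ≤ c0 * (1 + y ⬝ᵥ y) ^ (-(n : ℝ)) :=
            mul_le_mul_of_nonneg_left hrpow hc0.le
        _ ≤ h y := hlb y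
    have hhy0 : 0 ≤ h y :=
      le_trans (mul_nonneg hc0.le (mul_nonneg hKpos.le hxr.le)) hh'
    calc D * E * (c0 * (K * (1 + x ⬝ᵥ x) ^ (-(n : ℝ))))
        ≤ D * Real.exp (-Real.pi * ((x - y) ⬝ᵥ P.mulVec (x - y))) * h y := by
          apply mul_le_mul
          · exact mul_le_mul_of_nonneg_left hexp hDpos.le
          · exact hh'
          · exact mul_nonneg hc0.le (mul_nonneg hKpos.le hxr.le)
          · exact mul_nonneg hDpos.le (Real.exp_pos _).le
      _ = f y := rfl
  -- put it together
  have hmeas : MeasurableSet (Metric.closedBall x 1) := measurableSet_closedBall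
  have hμfin : volume (Metric.closedBall x 1) ≠ ⊤ := measure_closedBall_lt_top.ne
  have step1 := setIntegral_ge_of_const_le_real hmeas hμfin hptwise hint.integrableOn
  have step2 : (∫ y in Metric.closedBall x 1, f y) ≤ ∫ y, f y :=
    setIntegral_le_integral hint (Filter.Eventually.of_forall hfpos)
  have hVeq : (volume (Metric.closedBall x 1)).toReal = V := by
    rw [hV, Measure.addHaar_closedBall_center]
  rw [measureReal_def, hVeq] at step1
  calc c0 * D * E * K * V * (1 + x ⬝ᵥ x) ^ (-(n : ℝ))
      = D * E * (c0 * (K * (1 + x ⬝ᵥ x) ^ (-(n : ℝ)))) * V := by ring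
    _ ≤ ∫ y in Metric.closedBall x 1, f y := step1
    _ ≤ ∫ y, f y := step2
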